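/- Let A be an n×n complex block matrix [[A11,A12],[A21,A22]] with both A11 and A22 invertible. Then ppt(A) relative to the first block is invertible, and its inverse equals the principal pivot transform of A relative to the complementary block, i.e. (ppt(A, α))⁻¹ = ppt(A, αᶜ). -/

import Mathlib

/-- if both diagonal blocks are invertible then `ppt(A, α)` is
invertible and `(ppt(A, α))⁻¹ = ppt(A, αᶜ)`. -/
theorem stmt_5 {k l : Type*} [Fintype k] [Fintype l] [DecidableEq k] [DecidableEq l]
    (A11 : Matrix k k ℂ) (A12 : Matrix k l ℂ) (A21 : Matrix l k ℂ) (A22 : Matrix l l ℂ)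
    (h11 : IsUnit A11.det) (h22 : IsUnit A22.det) :
    IsUnit (Matrix.fromBlocks A11⁻¹ (-(A11⁻¹ * A12)) (A21 * A11⁻¹)
        (A22 - A21 * A11⁻¹ * A12)).det ∧
    (Matrix.fromBlocks A11⁻¹ (-(A11⁻¹ * A12)) (A21 * A11⁻¹)
        (A22 - A21 * A11⁻¹ * A12))⁻¹
      = Matrix.fromBlocks (A11 - A12 * A22⁻¹ * A21) (A12 * A22⁻¹)
          (-(A22⁻¹ * A21)) A22⁻¹ := by
  have hi11 : A11⁻¹ * A11 = 1 := Matrix.nonsing_inv_mul A11 h11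
  have hi22 : A22 * A22⁻¹ = 1 := Matrix.mul_nonsing_inv A22 h22
  have hi22' : A22 * (A22⁻¹ * A21) = A21 := by
    rw [← Matrix.mul_assoc, hi22, Matrix.one_mul]
  have key : (Matrix.fromBlocks A11⁻¹ (-(A11⁻¹ * A12)) (A21 * A11⁻¹)
        (A22 - A21 * A11⁻¹ * A12)) *
      (Matrix.fromBlocks (A11 - A12 * A22⁻¹ * A21) (A12 * A22⁻¹)
          (-(A22⁻¹ * A21)) A22⁻¹) = 1 := by
    rw [Matrix.fromBlocks_multiply, ← Matrix.fromBlocks_one]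
    have b11 : A11⁻¹ * (A11 - A12 * A22⁻¹ * A21) + -(A11⁻¹ * A12) * -(A22⁻¹ * A21) = 1 := by
      simp only [Matrix.mul_sub, Matrix.neg_mul, Matrix.mul_neg, neg_neg,
        Matrix.mul_assoc, hi11, hi22, hi22', Matrix.mul_one, Matrix.one_mul]
      abel
    have b12 : A11⁻¹ * (A12 * A22⁻¹) + -(A11⁻¹ * A12) * A22⁻¹ = 0 := by
      simp only [Matrix.neg_mul, Matrix.mul_assoc]
      abel
    have b21 : A21 * A11⁻¹ * (A11 - A12 * A22⁻¹ * A21) +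
        (A22 - A21 * A11⁻¹ * A12) * -(A22⁻¹ * A21) = 0 := by
      simp only [Matrix.mul_sub, Matrix.sub_mul, Matrix.neg_mul, Matrix.mul_neg, neg_neg,
        Matrix.mul_assoc, hi11, hi22, hi22', Matrix.mul_one, Matrix.one_mul]
      abel
    have b22 : A21 * A11⁻¹ * (A12 * A22⁻¹) + (A22 - A21 * A11⁻¹ * A12) * A22⁻¹ = 1 := by
      simp only [Matrix.sub_mul, Matrix.mul_assoc, hi22, hi22', Matrix.mul_one]
      abel
    rw [b11, b12, b21, b22]
  have hu : IsUnit (Matrix.fromBlocks A11⁻¹ (-(A11⁻¹ * A12)) (A21 * A11⁻¹)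
        (A22 - A21 * A11⁻¹ * A12)).det := by
    apply IsUnit.of_mul_eq_one _ ?_
    · exact (Matrix.fromBlocks (A11 - A12 * A22⁻¹ * A21) (A12 * A22⁻¹)
          (-(A22⁻¹ * A21)) A22⁻¹).det
    · rw [← Matrix.det_mul, key, Matrix.det_one]
  exact ⟨hu, Matrix.inv_eq_right_inv key⟩
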